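/- arXiv:1608.07842 — 2 statements merged into one kernel-verified Lean document; each statement's English description precedes it below -/
import Mathlib

section
/- Let q ∈ ℂ with 0 < |q| < 1, and let i denote the imaginary unit. Then 2 − Ũ₂(i, q) = 1/((iq;q)_∞ (−iq;q)_∞) = 1/(−q²; q²)_∞. -/
/-- The finite q-Pochhammer symbol `(z;q)_n = ∏_{i=0}^{n-1} (1 - z q^i)`. -/
noncomputable def qPoch (z q : ℂ) (n : ℕ) : ℂ := ∏ i ∈ Finset.range n, (1 - z * q ^ i)

/-- The infinite q-Pochhammer symbol `(z;q)_∞ = ∏_{i=0}^{∞} (1 - z q^i)`. -/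
noncomputable def qPochInf (z q : ℂ) : ℂ := ∏' i : ℕ, (1 - z * q ^ i)

/-- The rank generating function `Ũ_k(z,q) = ∑_{n=0}^∞ q^{kn} / ((zq;q)_n (z⁻¹q;q)_n)`
for unimodal sequences with a k-fold peak. -/
noncomputable def tildeU (k : ℕ) (z q : ℂ) : ℂ :=
  ∑' n : ℕ, q ^ (k * n) / (qPoch (z * q) q n * qPoch (z⁻¹ * q) q n)

open Filter Topology Finset

/-- Nonvanishing of factors. -/
lemma factor_ne_zero {c q : ℂ} (hc : ‖c‖ < 1) (hq : ‖q‖ ≤ 1) (n : ℕ) :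
    1 + c * q ^ n ≠ 0 := by
  intro h
  have h1 : c * q ^ n = -1 := by linear_combination h
  have : ‖c * q ^ n‖ < 1 := by
    rw [norm_mul, norm_pow]
    calc ‖c‖ * ‖q‖ ^ n ≤ ‖c‖ * 1 := by
          exact mul_le_mul_of_nonneg_left (pow_le_one₀ (norm_nonneg q) hq) (norm_nonneg c)
      _ = ‖c‖ := mul_one _
      _ < 1 := hc
  rw [h1] at this
  simp at this

lemma summable_log_aux {c q : ℂ} (hq : ‖q‖ < 1) :
    Summable (fun n : ℕ => Complex.log (1 + c * q ^ n)) := by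
  have hgeo : Summable (fun n : ℕ => 3 / 2 * ‖c‖ * ‖q‖ ^ n) :=
    (summable_geometric_of_lt_one (norm_nonneg q) hq).mul_left _
  apply hgeo.of_norm_bounded_eventually_nat
  have htend : Tendsto (fun n : ℕ => ‖c‖ * ‖q‖ ^ n) atTop (nhds 0) := by
    simpa using (tendsto_pow_atTop_nhds_zero_of_lt_one (norm_nonneg q) hq).const_mul ‖c‖
  have hev : ∀ᶠ n : ℕ in atTop, ‖c‖ * ‖q‖ ^ n ≤ 1 / 2 :=
    htend.eventually (eventually_le_nhds (show (0:ℝ) < 1/2 by norm_num))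
  filter_upwards [hev] with n hn
  have hz : ‖c * q ^ n‖ ≤ 1 / 2 := by
    rw [norm_mul, norm_pow]; exact hn
  calc ‖Complex.log (1 + c * q ^ n)‖ ≤ 3 / 2 * ‖c * q ^ n‖ :=
        Complex.norm_log_one_add_half_le_self hz
    _ = 3 / 2 * ‖c‖ * ‖q‖ ^ n := by
        rw [norm_mul, norm_pow]; ring

lemma aux_mult {c q : ℂ} (hc : ‖c‖ < 1) (hq : ‖q‖ < 1) :
    Multipliable (fun n : ℕ => 1 + c * q ^ n) ∧ (∏' n : ℕ, (1 + c * q ^ n)) ≠ 0 := by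
  have hne : ∀ (a : Unit) (n : ℕ), (fun n (_ : Unit) => 1 + c * q ^ n) n a ≠ 0 :=
    fun _ n => factor_ne_zero hc hq.le n
  have hsum : ∀ (_ : Unit), Summable (fun n : ℕ => Complex.log (1 + c * q ^ n)) :=
    fun _ => summable_log_aux hq
  constructor
  · exact Complex.multipliable_of_summable_log (f := fun n => 1 + c * q ^ n) (hsum ())
  · have this : Complex.exp (∑' n : ℕ, Complex.log (1 + c * q ^ n)) = ∏' n : ℕ, (1 + c * q ^ n) :=
      Complex.cexp_tsum_eq_tprod (fun n => hne () n) (hsum ())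
    rw [← this]
    exact Complex.exp_ne_zero _

/-- For `0 < |q| < 1`,
`2 − Ũ₂(i,q) = 1/((iq;q)_∞ (−iq;q)_∞) = 1/(−q²;q²)_∞`. -/
theorem tildeU_two_at_i (q : ℂ)
    (hq0 : 0 < ‖q‖) (hq1 : ‖q‖ < 1) :
    2 - tildeU 2 Complex.I q
        = (qPochInf (Complex.I * q) q * qPochInf (-Complex.I * q) q)⁻¹ ∧
    (qPochInf (Complex.I * q) q * qPochInf (-Complex.I * q) q)⁻¹
        = (qPochInf (-q ^ 2) (q ^ 2))⁻¹ := by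
  have habs2 : ‖q ^ 2‖ < 1 := by
    rw [norm_pow]
    exact pow_lt_one₀ (norm_nonneg q) hq1 two_ne_zero
  have habsIq : ‖Complex.I * q‖ < 1 := by simpa using hq1
  have habsnIq : ‖-(Complex.I * q)‖ < 1 := by simpa using hq1
  -- rewrite the finite products
  have hP : ∀ n, qPoch (-q ^ 2) (q ^ 2) n
      = ∏ i ∈ Finset.range n, (1 + q ^ 2 * (q ^ 2) ^ i) := by
    intro n; unfold qPoch; exact Finset.prod_congr rfl fun i _ => by ring
  have prodEq : ∀ n, qPoch (Complex.I * q) q n * qPoch (-Complex.I * q) q n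
      = qPoch (-q ^ 2) (q ^ 2) n := by
    intro n
    rw [hP]; unfold qPoch
    rw [← Finset.prod_mul_distrib]
    refine Finset.prod_congr rfl fun i _ => ?_
    linear_combination (-(q ^ 2 * (q ^ 2) ^ i)) * Complex.I_sq
  have hPne : ∀ n, qPoch (-q ^ 2) (q ^ 2) n ≠ 0 := by
    intro n
    rw [hP]
    exact Finset.prod_ne_zero_iff.mpr fun i _ => factor_ne_zero habs2 habs2.le i
  -- infinite product facts
  obtain ⟨hm, hne⟩ := aux_mult (c := q ^ 2) (q := q ^ 2) habs2 habs2
  have hL : qPochInf (-q ^ 2) (q ^ 2) = ∏' i : ℕ, (1 + q ^ 2 * (q ^ 2) ^ i) := by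
    unfold qPochInf; exact tprod_congr fun i => by ring
  have hLne : qPochInf (-q ^ 2) (q ^ 2) ≠ 0 := by rw [hL]; exact hne
  have hPt : Tendsto (fun n => qPoch (-q ^ 2) (q ^ 2) n) atTop
      (nhds (qPochInf (-q ^ 2) (q ^ 2))) := by
    rw [hL]
    exact hm.hasProd.tendsto_prod_nat.congr fun n => (hP n).symm
  have hInv : Tendsto (fun n => (qPoch (-q ^ 2) (q ^ 2) n)⁻¹) atTop
      (nhds (qPochInf (-q ^ 2) (q ^ 2))⁻¹) := hPt.inv₀ hLne
  -- rewrite tildeU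
  have htU : tildeU 2 Complex.I q
      = ∑' n : ℕ, (q ^ 2) ^ n / qPoch (-q ^ 2) (q ^ 2) n := by
    unfold tildeU
    refine tsum_congr fun n => ?_
    rw [Complex.inv_I, prodEq n, pow_mul]
  -- summability
  have hsummable : Summable (fun n : ℕ => (q ^ 2) ^ n / qPoch (-q ^ 2) (q ^ 2) n) := by
    obtain ⟨C, hC⟩ := hInv.norm.bddAbove_range
    apply Summable.of_norm_bounded (g := fun n => C * ‖q ^ 2‖ ^ n)
      ((summable_geometric_of_lt_one (norm_nonneg _) habs2).mul_left C)
    intro n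
    have h1 : ‖(qPoch (-q ^ 2) (q ^ 2) n)⁻¹‖ ≤ C := hC (Set.mem_range_self n)
    rw [div_eq_mul_inv, norm_mul, norm_pow]
    calc ‖q ^ 2‖ ^ n * ‖(qPoch (-q ^ 2) (q ^ 2) n)⁻¹‖
        ≤ ‖q ^ 2‖ ^ n * C :=
          mul_le_mul_of_nonneg_left h1 (pow_nonneg (norm_nonneg _) n)
      _ = C * ‖q ^ 2‖ ^ n := by ring
  -- telescoping partial sums
  have htel : ∀ n : ℕ, ∑ i ∈ Finset.range (n + 1), (q ^ 2) ^ i / qPoch (-q ^ 2) (q ^ 2) i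
      = 2 - (qPoch (-q ^ 2) (q ^ 2) n)⁻¹ := by
    intro n
    induction n with
    | zero => simp [qPoch]; norm_num
    | succ n ih =>
      rw [Finset.sum_range_succ, ih]
      have hstep : qPoch (-q ^ 2) (q ^ 2) (n + 1)
          = qPoch (-q ^ 2) (q ^ 2) n * (1 + q ^ 2 * (q ^ 2) ^ n) := by
        rw [hP, hP, Finset.prod_range_succ]
      have h1 := hPne n
      have h2 := factor_ne_zero habs2 habs2.le n
      rw [hstep]
      field_simp
      ring
  -- value of the sum
  have hS : (∑' n : ℕ, (q ^ 2) ^ n / qPoch (-q ^ 2) (q ^ 2) n)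
      = 2 - (qPochInf (-q ^ 2) (q ^ 2))⁻¹ := by
    have h2 : Tendsto (fun n : ℕ => ∑ i ∈ Finset.range (n + 1),
        (q ^ 2) ^ i / qPoch (-q ^ 2) (q ^ 2) i) atTop
        (nhds (∑' n : ℕ, (q ^ 2) ^ n / qPoch (-q ^ 2) (q ^ 2) n)) :=
      hsummable.hasSum.tendsto_sum_nat.comp (tendsto_add_atTop_nat 1)
    have h3 : Tendsto (fun n : ℕ => ∑ i ∈ Finset.range (n + 1),
        (q ^ 2) ^ i / qPoch (-q ^ 2) (q ^ 2) i) atTop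
        (nhds (2 - (qPochInf (-q ^ 2) (q ^ 2))⁻¹)) :=
      ((tendsto_const_nhds (x := (2 : ℂ))).sub hInv).congr fun n => (htel n).symm
    exact tendsto_nhds_unique h2 h3
  -- product identity at infinity
  obtain ⟨hmI, _⟩ := aux_mult (c := -(Complex.I * q)) (q := q) habsnIq hq1
  obtain ⟨hmI', _⟩ := aux_mult (c := Complex.I * q) (q := q) habsIq hq1
  have hprodInf : qPochInf (Complex.I * q) q * qPochInf (-Complex.I * q) q
      = qPochInf (-q ^ 2) (q ^ 2) := by
    unfold qPochInf
    have e1 : (fun i : ℕ => 1 - Complex.I * q * q ^ i)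
        = fun i : ℕ => 1 + -(Complex.I * q) * q ^ i := by funext i; ring
    have e2 : (fun i : ℕ => 1 - -Complex.I * q * q ^ i)
        = fun i : ℕ => 1 + Complex.I * q * q ^ i := by funext i; ring
    rw [e1, e2, ← Multipliable.tprod_mul hmI hmI']
    refine tprod_congr fun i => ?_
    linear_combination (-(q ^ 2 * (q ^ 2) ^ i)) * Complex.I_sq
  constructor
  · rw [htU, hS, hprodInf]
    ring
  · rw [hprodInf]
end

section
/- Let m be a positive integer, ζ_m := e^{2πi/m}, and let z ∈ ℂ with 0 < |z| < 1 and z^m + z^{-m} ≠ 1. Define the finite-formula values G(z) := (1 − z^m − z^{-m})⁻¹ · ∑_{n=0}^{m-1} ζ_m^n (z; ζ_m)_n (z⁻¹ζ_m; ζ_m)_n (the value of g₃(z, ζ_m)) and, for each positive integer k, V_k(z) := (−1/(1 − z^m − z^{-m})) · ∑_{n=0}^{m-1} ζ_m^{k(n+1)} (zζ_m; ζ_m)_n (z⁻¹ζ_m; ζ_m)_n (the value of U_k(−z, ζ_m)). Then the series ∑_{k=1}^∞ V_k(z) z^k ζ_m^{-k} converges and G(z) = ((z−1)/z) · ∑_{k=1}^∞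 V_k(z) z^k ζ_m^{-k}. -/
lemma qPoch_succ (z q : ℂ) (n : ℕ) :
    qPoch z q (n + 1) = qPoch z q n * (1 - z * q ^ n) :=
  Finset.prod_range_succ _ n

lemma qPoch_succ' (z q : ℂ) (n : ℕ) :
    qPoch z q (n + 1) = (1 - z) * qPoch (z * q) q n := by
  unfold qPoch
  rw [Finset.prod_range_succ']
  simp only [pow_zero, mul_one]
  rw [mul_comm]
  congr 1
  apply Finset.prod_congr rfl
  intro i _
  rw [pow_succ']
  ring

/-- Corollary 2.7: Let `ζ_m = e^{2πi/m}`, `0 < |z| < 1`,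
`z^m + z^{-m} ≠ 1`.  With
`G(z) = (1 − z^m − z^{-m})⁻¹ ∑_{n=0}^{m-1} ζ_m^n (z;ζ_m)_n (z⁻¹ζ_m;ζ_m)_n` (the value
of `g₃(z,ζ_m)`) and
`V_k(z) = −(1 − z^m − z^{-m})⁻¹ ∑_{n=0}^{m-1} ζ_m^{k(n+1)} (zζ_m;ζ_m)_n (z⁻¹ζ_m;ζ_m)_n`
(the value of `U_k(−z,ζ_m)`), the series `∑_{k=1}^∞ V_k(z) z^k ζ_m^{-k}` converges and
`G(z) = ((z−1)/z) ∑_{k=1}^∞ V_k(z) z^k ζ_m^{-k}`. -/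
theorem g3_eq_sum_strongU_at_root_of_unity (m : ℕ) (hm : 0 < m)
    (ζ : ℂ) (hζ : ζ = Complex.exp (2 * Real.pi * Complex.I / m))
    (z : ℂ) (hz0 : 0 < ‖z‖) (hz1 : ‖z‖ < 1)
    (hzm : z ^ m + z⁻¹ ^ m ≠ 1)
    (G : ℂ)
    (hG : G = (1 - z ^ m - z⁻¹ ^ m)⁻¹ *
      ∑ n ∈ Finset.range m, ζ ^ n * qPoch z ζ n * qPoch (z⁻¹ * ζ) ζ n)
    (V : ℕ → ℂ)
    (hV : ∀ k : ℕ, V k = -(1 - z ^ m - z⁻¹ ^ m)⁻¹ *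
      ∑ n ∈ Finset.range m, ζ ^ (k * (n + 1)) * qPoch (z * ζ) ζ n * qPoch (z⁻¹ * ζ) ζ n) :
    Summable (fun k : ℕ => V (k + 1) * z ^ (k + 1) * ζ⁻¹ ^ (k + 1)) ∧
    G = ((z - 1) / z) * ∑' k : ℕ, V (k + 1) * z ^ (k + 1) * ζ⁻¹ ^ (k + 1) := by
  have hζ0 : ζ ≠ 0 := by rw [hζ]; exact Complex.exp_ne_zero _
  have hζabs : ‖ζ‖ = 1 := by
    rw [hζ, Complex.norm_exp]
    have hre : (2 * (Real.pi : ℂ) * Complex.I / (m : ℂ)).re = 0 := by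
      simp [Complex.div_re]
    rw [hre, Real.exp_zero]
  have hz : z ≠ 0 := by
    intro h; rw [h] at hz0; simp at hz0
  set C := (1 - z ^ m - z⁻¹ ^ m)⁻¹ with hC
  set w : ℕ → ℂ := fun n => ζ ^ n * z with hw
  have hwabs : ∀ n, ‖w n‖ < 1 := by
    intro n
    simp only [hw, norm_mul, norm_pow, hζabs, one_pow, one_mul]
    exact hz1
  have hw1 : ∀ n, 1 - w n ≠ 0 := by
    intro n h
    have hw' : w n = 1 := by linear_combination -h
    have := hwabs n
    rw [hw'] at this
    simp at this
  set c : ℕ → ℂ := fun n => -C * qPoch (z * ζ) ζ n * qPoch (z⁻¹ * ζ) ζ n * w n with hc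
  have key : ∀ n k : ℕ, ζ ^ ((k + 1) * (n + 1)) * z ^ (k + 1) * ζ⁻¹ ^ (k + 1)
      = (w n) ^ (k + 1) := by
    intro n k
    rw [Nat.mul_comm, pow_mul, ← mul_pow, ← mul_pow]
    congr 1
    simp only [hw]
    field_simp
    ring
  have hf : ∀ k : ℕ, V (k + 1) * z ^ (k + 1) * ζ⁻¹ ^ (k + 1)
      = ∑ n ∈ Finset.range m, c n * (w n) ^ k := by
    intro k
    rw [hV, Finset.mul_sum, Finset.sum_mul, Finset.sum_mul]
    apply Finset.sum_congr rfl
    intro n _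
    have hk := key n k
    simp only [hc, hw] at hk ⊢
    linear_combination (-C * qPoch (z * ζ) ζ n * qPoch (z⁻¹ * ζ) ζ n) * hk
  have hsummand : ∀ n ∈ Finset.range m, Summable (fun k : ℕ => c n * (w n) ^ k) := by
    intro n _
    exact (summable_geometric_of_norm_lt_one
      (hwabs n)).mul_left (c n)
  have hS : Summable (fun k : ℕ => ∑ n ∈ Finset.range m, c n * (w n) ^ k) :=
    summable_sum hsummand
  have hSummable : Summable (fun k : ℕ => V (k + 1) * z ^ (k + 1) * ζ⁻¹ ^ (k + 1)) :=
    hS.congr fun k => (hf k).symm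
  refine ⟨hSummable, ?_⟩
  have ht : ∑' k : ℕ, V (k + 1) * z ^ (k + 1) * ζ⁻¹ ^ (k + 1)
      = ∑ n ∈ Finset.range m, c n * (1 - w n)⁻¹ := by
    rw [tsum_congr hf, Summable.tsum_finsetSum hsummand]
    apply Finset.sum_congr rfl
    intro n _
    rw [tsum_mul_left, tsum_geometric_of_norm_lt_one
      (hwabs n)]
  rw [ht, hG, Finset.mul_sum, Finset.mul_sum]
  apply Finset.sum_congr rfl
  intro n _
  have hkey : (1 - z) * qPoch (z * ζ) ζ n = qPoch z ζ n * (1 - w n) := by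
    rw [← qPoch_succ', qPoch_succ]
    simp only [hw]
    ring
  have hwn := hw1 n
  simp only [hw] at hkey
  simp only [hc, hw] at hwn ⊢
  set P := qPoch (z * ζ) ζ n with hP
  set Q := qPoch (z⁻¹ * ζ) ζ n with hQ
  set R := qPoch z ζ n with hR
  have e1 : (z - 1) / z * (-C * P * Q * (ζ ^ n * z) * (1 - ζ ^ n * z)⁻¹)
      = C * ζ ^ n * Q * ((1 - z) * P) * (1 - ζ ^ n * z)⁻¹ := by
    field_simp
    ring
  rw [e1, hkey,
    show C * ζ ^ n * Q * (R * (1 - ζ ^ n * z)) * (1 - ζ ^ n * z)⁻¹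
      = C * ζ ^ n * Q * R * ((1 - ζ ^ n * z) * (1 - ζ ^ n * z)⁻¹) by ring,
    mul_inv_cancel₀ hwn, mul_one]
  ring
end
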